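/- Let (M̃, d̃) be a metric space, λ > 1, and h_k : M̃ → M̃ (k ≥ 0) maps. Let f̃, f̃_k : M̃ → M̃ satisfy: f̃_k^n ∘ h_k = h_{k+n} ∘ f̃^n for all k, n (semi-conjugacy relations), d̃(f̃_k^n(u), f̃_k^n(v)) ≥ λ^n d̃(u,v) for all u,v (uniform expansion of the compositions), and there is c > 0 with d̃(z, h_m(z)) ≤ c for all m ≥ 0 and z ∈ M̃. Then the family {h_k}_{k≥0} is uniformly equicontinuous; in fact, for all y, z and all n, d̃(h_k(y), h_k(z)) ≤ 2c λ^{-n} + λ^{-n} d̃(f̃^n(y), f̃^n(z)). -/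

import Mathlib

/-- The composition `F_k^n = F_{k+n-1} ∘ ⋯ ∘ F_k`. -/
def itc {M : Type*} (F : ℕ → M → M) : ℕ → ℕ → M → M
  | _, 0 => id
  | k, n + 1 => fun z => F (k + n) (itc F k (n : ℕ) z)

/-- The equicontinuity estimate from the equi-conjugacy theorem: if
`f̃_k^n ∘ h_k = h_{k+n} ∘ f̃^n`, the compositions `f̃_k^n` expand distances by `λ^n`,
and `d(z, h_m(z)) ≤ c` uniformly, then
`d(h_k(y), h_k(z)) ≤ 2c λ^{-n} + λ^{-n} d(f̃^n(y), f̃^n(z))` for all `n`;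
in particular the family `{h_k}` is uniformly equicontinuous. -/
theorem stmt17 {M : Type*} [MetricSpace M]
    (lam : ℝ) (hlam : 1 < lam) (c : ℝ) (hc : 0 < c)
    (ft : M → M) (F : ℕ → M → M) (h : ℕ → M → M)
    (hsemi : ∀ k n : ℕ, ∀ z : M, itc F k n (h k z) = h (k + n) (ft^[n] z))
    (hexp : ∀ k n : ℕ, ∀ u v : M, lam ^ n * dist u v ≤ dist (itc F k n u) (itc F k n v))
    (hbd : ∀ m : ℕ, ∀ z : M, dist z (h m z) ≤ c) :
    ∀ k n : ℕ, ∀ y z : M,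
      dist (h k y) (h k z) ≤ 2 * c / lam ^ n + dist (ft^[n] y) (ft^[n] z) / lam ^ n := by
  intro k n y z
  have hpow : (0:ℝ) < lam ^ n := pow_pos (by linarith) n
  have key : lam ^ n * dist (h k y) (h k z) ≤ 2 * c + dist (ft^[n] y) (ft^[n] z) := by
    calc lam ^ n * dist (h k y) (h k z)
        ≤ dist (itc F k n (h k y)) (itc F k n (h k z)) := hexp k n _ _
      _ = dist (h (k+n) (ft^[n] y)) (h (k+n) (ft^[n] z)) := by rw [hsemi, hsemi]
      _ ≤ dist (h (k+n) (ft^[n] y)) (ft^[n] y) + dist (ft^[n] y) (h (k+n) (ft^[n] z)) :=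
          dist_triangle _ _ _
      _ ≤ dist (h (k+n) (ft^[n] y)) (ft^[n] y) + (dist (ft^[n] y) (ft^[n] z)
            + dist (ft^[n] z) (h (k+n) (ft^[n] z))) := by
          gcongr; exact dist_triangle _ _ _
      _ ≤ c + (dist (ft^[n] y) (ft^[n] z) + c) := by
          gcongr
          · rw [dist_comm]; exact hbd _ _
          · exact hbd _ _
      _ = 2 * c + dist (ft^[n] y) (ft^[n] z) := by ring
  rw [← add_div, le_div_iff₀ hpow, mul_comm]
  linarith
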